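/- Let p be an odd prime. Then in ℤ/pℤ: Σ_{0 < k < p, k even} (−1)^{k/2} / k = −q_p / 2 and Σ_{0 < k < p, k odd} (−1)^{(k+1)/2} / k = −(−1)^{(p−1)/2} · q_p / 2, where q_p is the Fermat quotient of 2. (In the paper's notation, ζ^{(2)}_p(1̄) = S_p(1̄) = −q_p/2 and t_p(1̄) = T_p(1̄) = −(−1)^{(p−1)/2} q_p/2.) -/

import Mathlib

open Finset

namespace Stmt9Aux

lemma choose_pred (p : ℕ) [Fact p.Prime] : ∀ k, k < p → (((p-1).choose k : ZMod p)) = (-1)^k := by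
  have hp := (Fact.out : p.Prime)
  intro k
  induction k with
  | zero => simp
  | succ k ih =>
    intro hk
    have h1 : (p-1).choose k + (p-1).choose (k+1) = p.choose (k+1) := by
      have := Nat.choose_succ_succ' (p-1) k
      rw [Nat.sub_add_cancel hp.one_lt.le] at this
      omega
    have hdvd : p ∣ p.choose (k+1) := hp.dvd_choose_self (Nat.succ_ne_zero k) hk
    have h0 : ((p.choose (k+1) : ℕ) : ZMod p) = 0 := (ZMod.natCast_eq_zero_iff _ _).2 hdvd
    have := congrArg (Nat.cast : ℕ → ZMod p) h1
    push_cast at this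
    rw [h0] at this
    have ihk := ih (lt_trans (Nat.lt_succ_self k) hk)
    rw [ihk] at this
    have : ((p-1).choose (k+1) : ZMod p) = -(-1)^k := by linear_combination this
    rw [this, pow_succ]
    ring

lemma hckey (p k : ℕ) [Fact p.Prime] (hk : 0 < k) (hkp : k < p) :
    ((p.choose k / p : ℕ) : ZMod p) * k = (-1)^(k-1) := by
  have hp := (Fact.out : p.Prime)
  have h1 : p * (p-1).choose (k-1) = p.choose k * k := by
    have := Nat.add_one_mul_choose_eq (p-1) (k-1)
    rw [Nat.sub_add_cancel hp.one_lt.le,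
      Nat.sub_add_cancel hk] at this
    exact this
  have hdvd : p ∣ p.choose k := hp.dvd_choose_self hk.ne' hkp
  have h2 : p.choose k = p * (p.choose k / p) := (Nat.mul_div_cancel' hdvd).symm
  have h3 : (p-1).choose (k-1) = (p.choose k / p) * k := by
    have hp0 : 0 < p := hp.pos
    rw [h2] at h1
    exact Nat.eq_of_mul_eq_mul_left hp0 (by linarith [h1])
  have := congrArg (Nat.cast : ℕ → ZMod p) h3
  push_cast at this
  rw [← this, choose_pred p (k-1) (by omega)]

abbrev Gi : GaussianInt := Zsqrtd.sqrtd

lemma gi_pow (k : ℕ) : ((Gi^k).re = if k % 2 = 0 then (-1)^(k/2) else 0)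
    ∧ ((Gi^k).im = if k % 2 = 1 then (-1)^(k/2) else 0) := by
  induction k with
  | zero => simp
  | succ k ih =>
    obtain ⟨h1, h2⟩ := ih
    have hre : (Gi^(k+1)).re = -(Gi^k).im := by
      rw [pow_succ]
      simp [Zsqrtd.re_mul]
    have him : (Gi^(k+1)).im = (Gi^k).re := by
      rw [pow_succ]
      simp [Zsqrtd.im_mul]
    constructor
    · rw [hre, h2]
      rcases Nat.even_or_odd k with h | h
      · have : k % 2 = 0 := Nat.even_iff.1 h
        simp [this, Nat.succ_mod_two_eq_one_iff.2 this]
      · have hk : k % 2 = 1 := Nat.odd_iff.1 h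
        have : (k+1) % 2 = 0 := by omega
        have hdiv : (k+1)/2 = k/2 + 1 := by omega
        simp [hk, this, hdiv, pow_succ]
    · rw [him, h1]
      rcases Nat.even_or_odd k with h | h
      · have hk : k % 2 = 0 := Nat.even_iff.1 h
        have : (k+1) % 2 = 1 := by omega
        have hdiv : (k+1)/2 = k/2 := by omega
        simp [hk, this, hdiv]
      · have hk : k % 2 = 1 := Nat.odd_iff.1 h
        have : (k+1) % 2 = 0 := by omega
        simp [hk, this]

lemma one_add_gi_sq : (1 + Gi)^2 = 2 * Gi := by
  ext <;> simp [pow_two, Zsqrtd.re_mul, Zsqrtd.im_mul]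

lemma two_pow_re (n : ℕ) : (((2:GaussianInt)^n).re = 2^n) ∧ ((2:GaussianInt)^n).im = 0 := by
  induction n with
  | zero => simp
  | succ n ih =>
    rw [pow_succ, pow_succ]
    constructor
    · simp [Zsqrtd.re_mul, ih.1, ih.2]
    · simp [Zsqrtd.im_mul, ih.1, ih.2]

lemma two_pow_mul (n : ℕ) (X : GaussianInt) :
    (((2:GaussianInt)^n * X).re = 2^n * X.re) ∧ ((2:GaussianInt)^n * X).im = 2^n * X.im := by
  constructor
  · simp [Zsqrtd.re_mul, (two_pow_re n).1, (two_pow_re n).2]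
  · simp [Zsqrtd.im_mul, (two_pow_re n).1, (two_pow_re n).2]

lemma closed_form (m : ℕ) :
    ∃ a b : ℤ, a^2 = 1 ∧ b^2 = 1 ∧ ((1 + Gi)^(2*m+1)).re = a * 2^m ∧
      ((1 + Gi)^(2*m+1)).im = b * 2^m := by
  have key : (1 + Gi)^(2*m+1) = (2:GaussianInt)^m * (Gi^m + Gi^(m+1)) := by
    rw [pow_succ, pow_mul, one_add_gi_sq, mul_pow]
    rw [pow_succ]
    ring
  have hre := (two_pow_mul m (Gi^m + Gi^(m+1))).1
  have him := (two_pow_mul m (Gi^m + Gi^(m+1))).2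
  have hXre : (Gi^m + Gi^(m+1)).re = (Gi^m).re + (Gi^(m+1)).re := rfl
  have hXim : (Gi^m + Gi^(m+1)).im = (Gi^m).im + (Gi^(m+1)).im := rfl
  rcases Nat.even_or_odd m with h | h
  · have hm : m % 2 = 0 := Nat.even_iff.1 h
    refine ⟨(-1)^(m/2), (-1)^(m/2), by rw [← pow_mul, mul_comm, pow_mul, neg_one_sq, one_pow],
      by rw [← pow_mul, mul_comm, pow_mul, neg_one_sq, one_pow], ?_, ?_⟩
    · rw [key, hre, hXre, (gi_pow m).1, (gi_pow (m+1)).1]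
      have h1 : (m+1) % 2 = 1 := by omega
      simp [hm, h1]
      ring
    · rw [key, him, hXim, (gi_pow m).2, (gi_pow (m+1)).2]
      have h1 : (m+1) % 2 = 1 := by omega
      have h2 : (m+1)/2 = m/2 := by omega
      simp [hm, h1, h2]
      ring
  · have hm : m % 2 = 1 := Nat.odd_iff.1 h
    refine ⟨(-1)^(m/2+1), (-1)^(m/2), by rw [← pow_mul, mul_comm, pow_mul, neg_one_sq, one_pow],
      by rw [← pow_mul, mul_comm, pow_mul, neg_one_sq, one_pow], ?_, ?_⟩
    · rw [key, hre, hXre, (gi_pow m).1, (gi_pow (m+1)).1]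
      have h1 : (m+1) % 2 = 0 := by omega
      have h2 : (m+1)/2 = m/2 + 1 := by omega
      simp [hm, h1, h2]
      ring
    · rw [key, him, hXim, (gi_pow m).2, (gi_pow (m+1)).2]
      have h1 : (m+1) % 2 = 0 := by omega
      simp [hm, h1]
      ring

def reHom : GaussianInt →+ ℤ := { toFun := Zsqrtd.re, map_zero' := rfl, map_add' := fun _ _ => rfl }
def imHom : GaussianInt →+ ℤ := { toFun := Zsqrtd.im, map_zero' := rfl, map_add' := fun _ _ => rfl }

lemma binom (p : ℕ) (hp1 : 1 < p) (hodd : p % 2 = 1) :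
    (((1+Gi)^p).re = 1 + ∑ k ∈ (Finset.Ioo 0 p).filter (fun k => k % 2 = 0),
        (p.choose k : ℤ) * (-1)^(k/2)) ∧
    (((1+Gi)^p).im = (-1)^(p/2) + ∑ k ∈ (Finset.Ioo 0 p).filter (fun k => k % 2 = 1),
        (p.choose k : ℤ) * (-1)^(k/2)) := by
  have hsum : (1+Gi)^p = ∑ k ∈ Finset.range (p+1), Gi^k * (p.choose k : GaussianInt) := by
    rw [add_comm, add_pow]
    simp
  have hterm_re : ∀ k, (Gi^k * (p.choose k : GaussianInt)).re
      = (if k % 2 = 0 then (p.choose k : ℤ) * (-1)^(k/2) else 0) := by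
    intro k
    rw [Zsqrtd.re_mul, Zsqrtd.re_natCast, Zsqrtd.im_natCast, (gi_pow k).1]
    split <;> ring
  have hterm_im : ∀ k, (Gi^k * (p.choose k : GaussianInt)).im
      = (if k % 2 = 1 then (p.choose k : ℤ) * (-1)^(k/2) else 0) := by
    intro k
    rw [Zsqrtd.im_mul, Zsqrtd.re_natCast, Zsqrtd.im_natCast, (gi_pow k).2]
    split <;> ring
  have hsplit : Finset.range (p+1) = insert 0 (insert p (Finset.Ioo 0 p)) := by
    ext x; simp; omega
  have h0 : (0:ℕ) ∉ insert p (Finset.Ioo 0 p) := by simp; omega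
  have hpmem : p ∉ Finset.Ioo 0 p := by simp
  constructor
  · have : ((1+Gi)^p).re = reHom ((1+Gi)^p) := rfl
    rw [this, hsum, map_sum]
    have : ∀ k ∈ Finset.range (p+1), reHom (Gi^k * (p.choose k : GaussianInt))
        = (if k % 2 = 0 then (p.choose k : ℤ) * (-1)^(k/2) else 0) := fun k _ => hterm_re k
    rw [Finset.sum_congr rfl this, hsplit, Finset.sum_insert h0, Finset.sum_insert hpmem,
      ← Finset.sum_filter]
    simp [hodd]
  · have : ((1+Gi)^p).im = imHom ((1+Gi)^p) := rfl
    rw [this, hsum, map_sum]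
    have : ∀ k ∈ Finset.range (p+1), imHom (Gi^k * (p.choose k : GaussianInt))
        = (if k % 2 = 1 then (p.choose k : ℤ) * (-1)^(k/2) else 0) := fun k _ => hterm_im k
    rw [Finset.sum_congr rfl this, hsplit, Finset.sum_insert h0, Finset.sum_insert hpmem,
      ← Finset.sum_filter]
    simp [hodd]

lemma quotient_eq (p m : ℕ) (Q : ℕ) (hp0 : 0 < p) (hpm : p = 2*m+1)
    (hQ : (p:ℤ) * Q = 2^(p-1) - 1)
    (e a ε : ℤ) (ha : a^2 = 1) (hε : ε^2 = 1) (hpe : (p:ℤ)*e = a*2^m - ε) :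
    (Q : ℤ) = 2*ε*e + p*e^2 := by
  have h2m : (2:ℤ)^(p-1) = (2^m)^2 := by
    rw [← pow_mul]
    congr 1
    omega
  have hsq : (a*2^m)^2 = (ε + p*e)^2 := by
    have : a*2^m = ε + p*e := by linarith
    rw [this]
  have hkey : (p:ℤ) * Q = (p:ℤ) * (2*ε*e + p*e^2) := by
    rw [hQ, h2m]
    nlinarith [hsq, ha, hε]
  have hpne : (p:ℤ) ≠ 0 := by exact_mod_cast hp0.ne'
  exact mul_left_cancel₀ hpne hkey

end Stmt9Aux

def qp (p : ℕ) : ZMod p := (((2 ^ (p - 1) - 1) / p : ℕ) : ZMod p)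

theorem stmt9 (p : ℕ) [Fact p.Prime] (hp2 : p ≠ 2) :
    (∑ k ∈ (Finset.Ioo 0 p).filter (fun k => k % 2 = 0),
        (-1 : ZMod p) ^ (k / 2) * ((k : ZMod p))⁻¹ = - qp p / 2) ∧
    (∑ k ∈ (Finset.Ioo 0 p).filter (fun k => k % 2 = 1),
        (-1 : ZMod p) ^ ((k + 1) / 2) * ((k : ZMod p))⁻¹
          = - (-1 : ZMod p) ^ ((p - 1) / 2) * qp p / 2) := by
  have hp := (Fact.out : p.Prime)
  have hp1 : 1 < p := hp.one_lt
  have hodd : p % 2 = 1 := Nat.odd_iff.1 (hp.odd_of_ne_two hp2)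
  set m := (p-1)/2 with hm
  have hpm : p = 2*m + 1 := by omega
  have h2 : (2 : ZMod p) ≠ 0 := by
    have h : ¬ (p ∣ 2) := by
      intro h
      have := Nat.le_of_dvd (by norm_num) h
      omega
    have h' : ((2:ℕ) : ZMod p) ≠ 0 := fun hc => h ((ZMod.natCast_eq_zero_iff _ _).1 hc)
    exact_mod_cast h'
  have h1le : 1 ≤ 2^(p-1) := Nat.one_le_two_pow
  have hdvd21 : p ∣ 2^(p-1) - 1 := by
    have h2p : (2 : ZMod p)^(p-1) = 1 := ZMod.pow_card_sub_one_eq_one h2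
    have hc : ((2^(p-1) - 1 : ℕ) : ZMod p) = 0 := by
      rw [Nat.cast_sub h1le]
      push_cast
      rw [h2p]
      ring
    exact (ZMod.natCast_eq_zero_iff _ _).1 hc
  set Q : ℕ := (2^(p-1) - 1)/p with hQdef
  have hQ : (p:ℤ) * Q = 2^(p-1) - 1 := by
    have h := Nat.mul_div_cancel' hdvd21
    zify [h1le] at h
    exact_mod_cast h
  have hqpQ : qp p = ((Q:ℤ) : ZMod p) := (Int.cast_natCast Q).symm
  obtain ⟨a, b, ha, hb, hre, him⟩ := Stmt9Aux.closed_form m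
  rw [← hpm] at hre him
  obtain ⟨hbre, hbim⟩ := Stmt9Aux.binom p hp1 hodd
  have hck : ∀ k, 0 < k → k < p → (p:ℤ) * ((p.choose k / p : ℕ) : ℤ) = (p.choose k : ℤ) := by
    intro k hk1 hk2
    exact_mod_cast congrArg (Nat.cast : ℕ → ℤ)
      (Nat.mul_div_cancel' (hp.dvd_choose_self hk1.ne' hk2))
  have hkinv : ∀ k, 0 < k → k < p →
      ((p.choose k / p : ℕ) : ZMod p) = (-1)^(k-1) * ((k:ZMod p))⁻¹ := by
    intro k hk1 hk2
    have hk0 : ((k:ℕ) : ZMod p) ≠ 0 := by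
      intro hc
      have hd := (ZMod.natCast_eq_zero_iff _ _).1 hc
      have := Nat.le_of_dvd hk1 hd
      omega
    have h := Stmt9Aux.hckey p k hk1 hk2
    rw [← h, mul_assoc, mul_inv_cancel₀ hk0, mul_one]
  constructor
  · set S := ∑ k ∈ (Finset.Ioo 0 p).filter (fun k => k % 2 = 0),
        (-1 : ZMod p) ^ (k / 2) * ((k : ZMod p))⁻¹ with hS
    set e : ℤ := ∑ k ∈ (Finset.Ioo 0 p).filter (fun k => k % 2 = 0),
        ((p.choose k / p : ℕ) : ℤ) * (-1)^(k/2) with he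
    have hpe : (p:ℤ) * e = a * 2^m - 1 := by
      rw [he, Finset.mul_sum]
      have hcong : ∀ k ∈ (Finset.Ioo 0 p).filter (fun k => k % 2 = 0),
          (p:ℤ) * (((p.choose k / p : ℕ) : ℤ) * (-1)^(k/2)) = (p.choose k : ℤ) * (-1)^(k/2) := by
        intro k hk
        simp only [Finset.mem_filter, Finset.mem_Ioo] at hk
        rw [← mul_assoc, hck k hk.1.1 hk.1.2]
      rw [Finset.sum_congr rfl hcong]
      have hE := hbre
      rw [hre] at hE
      linarith
    have hQe : (Q:ℤ) = 2*1*e + p*e^2 :=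
      Stmt9Aux.quotient_eq p m Q hp.pos hpm hQ e a 1 ha (by norm_num) (by linarith)
    have hecast : ((e : ℤ) : ZMod p) = - S := by
      rw [he, hS]
      simp only [Int.cast_sum, Int.cast_mul, Int.cast_pow, Int.cast_neg, Int.cast_one,
        Int.cast_natCast]
      rw [← Finset.sum_neg_distrib]
      apply Finset.sum_congr rfl
      intro k hk
      simp only [Finset.mem_filter, Finset.mem_Ioo] at hk
      rw [hkinv k hk.1.1 hk.1.2]
      have hodd' : ((-1 : ZMod p))^(k-1) = -1 := Odd.neg_one_pow (Nat.odd_iff.2 (by omega))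
      rw [hodd']
      ring
    have hqp2 : qp p = 2 * (-S) := by
      have hc := congrArg (Int.cast : ℤ → ZMod p) hQe
      push_cast at hc
      rw [ZMod.natCast_self, hecast] at hc
      rw [hqpQ]
      push_cast
      linear_combination hc
    rw [hqp2]
    field_simp
  · set T := ∑ k ∈ (Finset.Ioo 0 p).filter (fun k => k % 2 = 1),
        (-1 : ZMod p) ^ ((k + 1) / 2) * ((k : ZMod p))⁻¹ with hT
    set o : ℤ := ∑ k ∈ (Finset.Ioo 0 p).filter (fun k => k % 2 = 1),
        ((p.choose k / p : ℕ) : ℤ) * (-1)^(k/2) with ho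
    have hp2m : p/2 = m := by omega
    have hpo : (p:ℤ) * o = b * 2^m - (-1)^m := by
      rw [ho, Finset.mul_sum]
      have hcong : ∀ k ∈ (Finset.Ioo 0 p).filter (fun k => k % 2 = 1),
          (p:ℤ) * (((p.choose k / p : ℕ) : ℤ) * (-1)^(k/2)) = (p.choose k : ℤ) * (-1)^(k/2) := by
        intro k hk
        simp only [Finset.mem_filter, Finset.mem_Ioo] at hk
        rw [← mul_assoc, hck k hk.1.1 hk.1.2]
      rw [Finset.sum_congr rfl hcong]
      have hO := hbim
      rw [him, hp2m] at hO
      linarith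
    have hQo : (Q:ℤ) = 2*(-1)^m*o + p*o^2 :=
      Stmt9Aux.quotient_eq p m Q hp.pos hpm hQ o b ((-1)^m) hb
        (by rw [← pow_mul, mul_comm, pow_mul, neg_one_sq, one_pow]) (by linarith)
    have hocast : ((o : ℤ) : ZMod p) = - T := by
      rw [ho, hT]
      simp only [Int.cast_sum, Int.cast_mul, Int.cast_pow, Int.cast_neg, Int.cast_one,
        Int.cast_natCast]
      rw [← Finset.sum_neg_distrib]
      apply Finset.sum_congr rfl
      intro k hk
      simp only [Finset.mem_filter, Finset.mem_Ioo] at hk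
      rw [hkinv k hk.1.1 hk.1.2]
      have heven : ((-1 : ZMod p))^(k-1) = 1 := Even.neg_one_pow (Nat.even_iff.2 (by omega))
      have hdiv : (k+1)/2 = k/2 + 1 := by omega
      rw [heven, hdiv, pow_succ]
      ring
    have hsqm : ((-1 : ZMod p))^m * ((-1 : ZMod p))^m = 1 := by
      rw [← pow_add]
      exact Even.neg_one_pow ⟨m, rfl⟩
    have hqp2 : qp p = 2 * (-1 : ZMod p)^m * (-T) := by
      have hc := congrArg (Int.cast : ℤ → ZMod p) hQo
      push_cast at hc
      rw [ZMod.natCast_self, hocast] at hc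
      rw [hqpQ]
      push_cast
      linear_combination hc
    rw [hqp2]
    field_simp
    have hsq2 : ((-1 : ZMod p))^(m*2) = 1 := by rw [pow_mul', neg_one_sq, one_pow]
    linear_combination (-T) * hsq2
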